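/- Removal of an isolated component: let A = diag(A₁, A₂) be block diagonal with conformably stacked X = [X₁; X₂], and let f_k denote the sum-readout GIN on k nodes: f_k(B, Y) = 𝟙_kᵀ(B + (1+ε)I_k)·Y·Θ. If D + N + Nε ≠ 0 for the full graph (D = Σ_{ij}A_{ij}, N total nodes), then there exists p ∈ ℝ^{1×F} such that f_N(A, X + 𝟙_N·p) = f_{N₁}(A₁, X₁), i.e., the prompted full graph has the same representation as the graph with component 2 removed. -/

import Mathlib

open Matrix BigOperators

/-- One-layer linear GIN with sum readout: 𝟙ᵀ (A + (1+ε) I) X Θ as a row vector. -/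
noncomputable def gin {n : Type*} [Fintype n] [DecidableEq n] {F Fp : ℕ}
    (ε : ℝ) (Θ : Matrix (Fin F) (Fin Fp) ℝ)
    (A : Matrix n n ℝ) (X : Matrix n (Fin F) ℝ) : Fin Fp → ℝ :=
  fun j => ∑ i, ((A + (1 + ε) • (1 : Matrix n n ℝ)) * X * Θ) i j

/-- 𝟙·p : the matrix each of whose rows is the row vector p. -/
def prompt (n : Type*) {F : ℕ} (p : Fin F → ℝ) : Matrix n (Fin F) ℝ :=
  Matrix.of fun _ j => p j

lemma gin_eq {n : Type*} [Fintype n] [DecidableEq n] {F Fp : ℕ}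
    (ε : ℝ) (Θ : Matrix (Fin F) (Fin Fp) ℝ)
    (A : Matrix n n ℝ) (X : Matrix n (Fin F) ℝ) (j : Fin Fp) :
    gin ε Θ A X j
      = ∑ f, (∑ i, ((A + (1 + ε) • (1 : Matrix n n ℝ)) * X) i f) * Θ f j := by
  simp only [gin, Matrix.mul_apply, Finset.sum_mul]
  exact Finset.sum_comm

lemma gin_add {n : Type*} [Fintype n] [DecidableEq n] {F Fp : ℕ}
    (ε : ℝ) (Θ : Matrix (Fin F) (Fin Fp) ℝ)
    (A : Matrix n n ℝ) (X Y : Matrix n (Fin F) ℝ) :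
    gin ε Θ A (X + Y) = gin ε Θ A X + gin ε Θ A Y := by
  funext j
  simp [gin, Matrix.mul_add, Matrix.add_mul, Matrix.add_apply, Finset.sum_add_distrib]

lemma gin_prompt {n : Type*} [Fintype n] [DecidableEq n] {F Fp : ℕ}
    (ε : ℝ) (Θ : Matrix (Fin F) (Fin Fp) ℝ)
    (A : Matrix n n ℝ) (p : Fin F → ℝ) (j : Fin Fp) :
    gin ε Θ A (prompt n p) j
      = (∑ i, ∑ k, (A + (1 + ε) • (1 : Matrix n n ℝ)) i k) * ∑ f, p f * Θ f j := by
  rw [gin_eq]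
  have key : ∀ f, (∑ i, ((A + (1 + ε) • (1 : Matrix n n ℝ)) * prompt n p) i f)
      = (∑ i, ∑ k, (A + (1 + ε) • (1 : Matrix n n ℝ)) i k) * p f := by
    intro f
    simp only [Matrix.mul_apply, prompt, Matrix.of_apply, ← Finset.sum_mul]
  simp only [key]
  rw [Finset.mul_sum]
  congr 1; funext f; ring

theorem stmt19 (N₁ N₂ F Fp : ℕ)
    (A₁ : Matrix (Fin N₁) (Fin N₁) ℝ) (A₂ : Matrix (Fin N₂) (Fin N₂) ℝ)
    (X₁ : Matrix (Fin N₁) (Fin F) ℝ) (X₂ : Matrix (Fin N₂) (Fin F) ℝ)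
    (ε : ℝ) (Θ : Matrix (Fin F) (Fin Fp) ℝ)
    (A : Matrix (Fin N₁ ⊕ Fin N₂) (Fin N₁ ⊕ Fin N₂) ℝ)
    (hA : A = Matrix.fromBlocks A₁ 0 0 A₂)
    (X : Matrix (Fin N₁ ⊕ Fin N₂) (Fin F) ℝ)
    (hX : X = Matrix.of (Sum.elim X₁ X₂))
    (hD : (∑ i, ∑ j, A i j) + (N₁ + N₂) + (N₁ + N₂) * ε ≠ 0) :
    ∃ p : Fin F → ℝ,
      gin ε Θ A (X + prompt (Fin N₁ ⊕ Fin N₂) p) = gin ε Θ A₁ X₁ := by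
  classical
  set c : ℝ := (∑ i, ∑ j, A i j) + (N₁ + N₂) + (N₁ + N₂) * ε with hc
  set v : Fin F → ℝ :=
    fun f => ∑ i, ((A₂ + (1 + ε) • (1 : Matrix (Fin N₂) (Fin N₂) ℝ)) * X₂) i f with hv
  refine ⟨fun f => -(v f) / c, ?_⟩
  funext j
  rw [gin_add]
  have hsum : (∑ i, ∑ k, (A + (1 + ε) • (1 : Matrix (Fin N₁ ⊕ Fin N₂) (Fin N₁ ⊕ Fin N₂) ℝ)) i k) = c := by
    simp only [Matrix.add_apply, Matrix.smul_apply, Matrix.one_apply, smul_eq_mul,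
      Finset.sum_add_distrib, mul_ite, mul_one, mul_zero]
    rw [hc]
    have : ∀ i : Fin N₁ ⊕ Fin N₂,
        (∑ k, if i = k then (1 + ε) else 0) = 1 + ε := by
      intro i; simp
    simp only [this, Finset.sum_const, Finset.card_univ, nsmul_eq_mul]
    simp [Fintype.card_sum]
    ring
  have hprompt : gin ε Θ A (prompt (Fin N₁ ⊕ Fin N₂) (fun f => -(v f) / c)) j
      = -∑ f, v f * Θ f j := by
    rw [gin_prompt, hsum]
    rw [Finset.mul_sum, ← Finset.sum_neg_distrib]
    congr 1; funext f
    field_simp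
  -- block decomposition
  have hsplit : gin ε Θ A X j = gin ε Θ A₁ X₁ j + gin ε Θ A₂ X₂ j := by
    subst hA hX
    have h1 : (Matrix.fromBlocks A₁ 0 0 A₂
        + (1 + ε) • (1 : Matrix (Fin N₁ ⊕ Fin N₂) (Fin N₁ ⊕ Fin N₂) ℝ))
        = Matrix.fromBlocks (A₁ + (1 + ε) • 1) 0 0 (A₂ + (1 + ε) • 1) := by
      rw [← Matrix.fromBlocks_one, Matrix.fromBlocks_smul, Matrix.fromBlocks_add]
      simp
    simp only [gin, h1]
    rw [Fintype.sum_sum_type]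
    congr 1
    · congr 1; funext i
      simp [Matrix.mul_apply, Fintype.sum_sum_type, Matrix.fromBlocks_apply₁₁, Matrix.of_apply, Sum.elim_inl, Sum.elim,
        Finset.sum_mul]
    · congr 1; funext i
      simp [Matrix.mul_apply, Fintype.sum_sum_type, Matrix.fromBlocks_apply₂₂, Matrix.of_apply, Sum.elim_inr, Sum.elim,
        Finset.sum_mul]
  have hgin2 : gin ε Θ A₂ X₂ j = ∑ f, v f * Θ f j := by
    rw [gin_eq]
  rw [Pi.add_apply, hprompt, hsplit, ← hgin2]
  ring
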